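/- Let M, N ∈ SL(2, ℝ) with bottom-left entries c_M, c_N and bottom-left entry c_{MN} of the product MN, all nonzero. Define ω(M, N) := (-log j(MN, z) + log j(M, Nz) + log j(N, z))/(2πi) using the principal branch of logarithm (argument in (-π, π]), where j((a,b;c,d), z) := cz + d and z is any point of the upper half plane. Then ω(M, N) = (sgn(c_M) + sgn(c_N) - sgn(c_{MN}) - sgn(c_M c_N c_{MN}))/4. -/

import Mathlib

/-- The automorphy factor `j(γ, z) = cz + d`. -/
noncomputable def jfac (M : Matrix.SpecialLinearGroup (Fin 2) ℝ) (z : ℂ) : ℂ :=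
  (M 1 0 : ℝ) * z + (M 1 1 : ℝ)

/-- The Möbius action of `SL(2, ℝ)` on the upper half plane. -/
noncomputable def moebiusAct (M : Matrix.SpecialLinearGroup (Fin 2) ℝ) (z : ℂ) : ℂ :=
  ((M 0 0 : ℝ) * z + (M 0 1 : ℝ)) / jfac M z

/-- The phase factor `ω(M, N)` (at the point `z`), defined via the principal
branch of the complex logarithm. -/
noncomputable def phaseFactor (M N : Matrix.SpecialLinearGroup (Fin 2) ℝ) (z : ℂ) : ℂ :=
  (-(Complex.log (jfac (M * N) z)) + Complex.log (jfac M (moebiusAct N z))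
      + Complex.log (jfac N z)) / (2 * Real.pi * Complex.I)

lemma jfac_im (M : Matrix.SpecialLinearGroup (Fin 2) ℝ) (z : ℂ) :
    (jfac M z).im = M 1 0 * z.im := by
  simp [jfac]

lemma moebius_im (N : Matrix.SpecialLinearGroup (Fin 2) ℝ) (z : ℂ) :
    (moebiusAct N z).im = z.im / Complex.normSq (jfac N z) := by
  have hd : (N 0 0 : ℝ) * N 1 1 - N 0 1 * N 1 0 = 1 := by
    have := N.2; rwa [Matrix.det_fin_two] at this
  simp only [moebiusAct, jfac, Complex.div_im, Complex.add_im, Complex.add_re,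
    Complex.mul_im, Complex.mul_re, Complex.ofReal_re, Complex.ofReal_im]
  rw [div_sub_div_same]
  congr 1
  linear_combination z.im * hd

lemma jfac_cocycle (M N : Matrix.SpecialLinearGroup (Fin 2) ℝ) (z : ℂ)
    (hb : jfac N z ≠ 0) :
    jfac (M * N) z = jfac M (moebiusAct N z) * jfac N z := by
  have hb' : ((N 1 0 : ℝ) : ℂ) * z + ((N 1 1 : ℝ) : ℂ) ≠ 0 := by simpa [jfac] using hb
  simp only [jfac, moebiusAct, Matrix.SpecialLinearGroup.coe_mul, Matrix.mul_apply,
    Fin.sum_univ_two]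
  have hb'' : z * ((N 1 0 : ℝ) : ℂ) + ((N 1 1 : ℝ) : ℂ) ≠ 0 := by rwa [mul_comm]
  field_simp
  push_cast
  ring

lemma arg_pos_of_im_pos {w : ℂ} (h : 0 < w.im) : 0 < w.arg := by
  rcases (Complex.arg_nonneg_iff.mpr h.le).lt_or_eq with h' | h'
  · exact h'
  · exact absurd (Complex.arg_eq_zero_iff.mp h'.symm).2 h.ne'

lemma sign_mul_pos' (c t : ℝ) (ht : 0 < t) : Real.sign (c * t) = Real.sign c := by
  rcases lt_trichotomy c 0 with h | h | h
  · rw [Real.sign_of_neg h, Real.sign_of_neg (mul_neg_of_neg_of_pos h ht)]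
  · simp [h]
  · rw [Real.sign_of_pos h, Real.sign_of_pos (mul_pos h ht)]

lemma arg_key (a b : ℂ) (ha : a.im ≠ 0) (hb : b.im ≠ 0) (hab : (a * b).im ≠ 0) :
    a.arg + b.arg - (a * b).arg =
      2 * Real.pi * ((Real.sign a.im + Real.sign b.im - Real.sign (a * b).im
        - Real.sign (a.im * b.im * (a * b).im)) / 4) := by
  have ha0 : a ≠ 0 := fun h => ha (by simp [h])
  have hb0 : b ≠ 0 := fun h => hb (by simp [h])
  have hang : ((a.arg + b.arg : ℝ) : Real.Angle) = ((a * b).arg : ℝ) := by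
    rw [Real.Angle.coe_add]; exact (Complex.arg_mul_coe_angle ha0 hb0).symm
  obtain ⟨k, hk⟩ := Real.Angle.angle_eq_iff_two_pi_dvd_sub.mp hang
  have hp := Real.pi_pos
  have uA : a.arg < Real.pi := Complex.arg_lt_pi_iff.2 (Or.inr ha)
  have uB : b.arg < Real.pi := Complex.arg_lt_pi_iff.2 (Or.inr hb)
  have uC : (a * b).arg < Real.pi := Complex.arg_lt_pi_iff.2 (Or.inr hab)
  have lA := Complex.neg_pi_lt_arg a
  have lB := Complex.neg_pi_lt_arg b
  have lC := Complex.neg_pi_lt_arg (a * b)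
  rcases ha.lt_or_gt with h1 | h1 <;> rcases hb.lt_or_gt with h2 | h2 <;>
      rcases hab.lt_or_gt with h3 | h3
  · -- (-,-,-)
    rw [Real.sign_of_neg h1, Real.sign_of_neg h2, Real.sign_of_neg h3,
      Real.sign_of_neg (mul_neg_of_pos_of_neg (mul_pos_of_neg_of_neg h1 h2) h3)]
    have sA := Complex.arg_neg_iff.mpr h1
    have sB := Complex.arg_neg_iff.mpr h2
    have sC := Complex.arg_neg_iff.mpr h3
    have hk0 : k = 0 := by
      have hb1 : 2 * Real.pi * ((-1 : ℤ) : ℝ) < 2 * Real.pi * (k : ℝ) := by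
        rw [← hk]; push_cast; linarith
      have hb2 : 2 * Real.pi * (k : ℝ) < 2 * Real.pi * ((1 : ℤ) : ℝ) := by
        rw [← hk]; push_cast; linarith
      have l1 : (-1 : ℤ) < k := by
        exact_mod_cast (mul_lt_mul_iff_right₀ (by positivity : (0:ℝ) < 2 * Real.pi)).mp hb1
      have l2 : k < (1 : ℤ) := by
        exact_mod_cast (mul_lt_mul_iff_right₀ (by positivity : (0:ℝ) < 2 * Real.pi)).mp hb2
      omega
    rw [hk0] at hk; push_cast at hk; linarith
  · -- (-,-,+)
    rw [Real.sign_of_neg h1, Real.sign_of_neg h2, Real.sign_of_pos h3,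
      Real.sign_of_pos (mul_pos (mul_pos_of_neg_of_neg h1 h2) h3)]
    have sA := Complex.arg_neg_iff.mpr h1
    have sB := Complex.arg_neg_iff.mpr h2
    have sC := arg_pos_of_im_pos h3
    have hk0 : k = -1 := by
      have hb1 : 2 * Real.pi * ((-2 : ℤ) : ℝ) < 2 * Real.pi * (k : ℝ) := by
        rw [← hk]; push_cast; linarith
      have hb2 : 2 * Real.pi * (k : ℝ) < 2 * Real.pi * ((0 : ℤ) : ℝ) := by
        rw [← hk]; push_cast; linarith
      have l1 : (-2 : ℤ) < k := by
        exact_mod_cast (mul_lt_mul_iff_right₀ (by positivity : (0:ℝ) < 2 * Real.pi)).mp hb1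
      have l2 : k < (0 : ℤ) := by
        exact_mod_cast (mul_lt_mul_iff_right₀ (by positivity : (0:ℝ) < 2 * Real.pi)).mp hb2
      omega
    rw [hk0] at hk; push_cast at hk; linarith
  · -- (-,+,-)
    rw [Real.sign_of_neg h1, Real.sign_of_pos h2, Real.sign_of_neg h3,
      Real.sign_of_pos (mul_pos_of_neg_of_neg (mul_neg_of_neg_of_pos h1 h2) h3)]
    have sA := Complex.arg_neg_iff.mpr h1
    have sB := arg_pos_of_im_pos h2
    have sC := Complex.arg_neg_iff.mpr h3
    have hk0 : k = 0 := by
      have hb1 : 2 * Real.pi * ((-1 : ℤ) : ℝ) < 2 * Real.pi * (k : ℝ) := by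
        rw [← hk]; push_cast; linarith
      have hb2 : 2 * Real.pi * (k : ℝ) < 2 * Real.pi * ((1 : ℤ) : ℝ) := by
        rw [← hk]; push_cast; linarith
      have l1 : (-1 : ℤ) < k := by
        exact_mod_cast (mul_lt_mul_iff_right₀ (by positivity : (0:ℝ) < 2 * Real.pi)).mp hb1
      have l2 : k < (1 : ℤ) := by
        exact_mod_cast (mul_lt_mul_iff_right₀ (by positivity : (0:ℝ) < 2 * Real.pi)).mp hb2
      omega
    rw [hk0] at hk; push_cast at hk; linarith
  · -- (-,+,+)
    rw [Real.sign_of_neg h1, Real.sign_of_pos h2, Real.sign_of_pos h3,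
      Real.sign_of_neg (mul_neg_of_neg_of_pos (mul_neg_of_neg_of_pos h1 h2) h3)]
    have sA := Complex.arg_neg_iff.mpr h1
    have sB := arg_pos_of_im_pos h2
    have sC := arg_pos_of_im_pos h3
    have hk0 : k = 0 := by
      have hb1 : 2 * Real.pi * ((-1 : ℤ) : ℝ) < 2 * Real.pi * (k : ℝ) := by
        rw [← hk]; push_cast; linarith
      have hb2 : 2 * Real.pi * (k : ℝ) < 2 * Real.pi * ((1 : ℤ) : ℝ) := by
        rw [← hk]; push_cast; linarith
      have l1 : (-1 : ℤ) < k := by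
        exact_mod_cast (mul_lt_mul_iff_right₀ (by positivity : (0:ℝ) < 2 * Real.pi)).mp hb1
      have l2 : k < (1 : ℤ) := by
        exact_mod_cast (mul_lt_mul_iff_right₀ (by positivity : (0:ℝ) < 2 * Real.pi)).mp hb2
      omega
    rw [hk0] at hk; push_cast at hk; linarith
  · -- (+,-,-)
    rw [Real.sign_of_pos h1, Real.sign_of_neg h2, Real.sign_of_neg h3,
      Real.sign_of_pos (mul_pos_of_neg_of_neg (mul_neg_of_pos_of_neg h1 h2) h3)]
    have sA := arg_pos_of_im_pos h1
    have sB := Complex.arg_neg_iff.mpr h2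
    have sC := Complex.arg_neg_iff.mpr h3
    have hk0 : k = 0 := by
      have hb1 : 2 * Real.pi * ((-1 : ℤ) : ℝ) < 2 * Real.pi * (k : ℝ) := by
        rw [← hk]; push_cast; linarith
      have hb2 : 2 * Real.pi * (k : ℝ) < 2 * Real.pi * ((1 : ℤ) : ℝ) := by
        rw [← hk]; push_cast; linarith
      have l1 : (-1 : ℤ) < k := by
        exact_mod_cast (mul_lt_mul_iff_right₀ (by positivity : (0:ℝ) < 2 * Real.pi)).mp hb1
      have l2 : k < (1 : ℤ) := by
        exact_mod_cast (mul_lt_mul_iff_right₀ (by positivity : (0:ℝ) < 2 * Real.pi)).mp hb2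
      omega
    rw [hk0] at hk; push_cast at hk; linarith
  · -- (+,-,+)
    rw [Real.sign_of_pos h1, Real.sign_of_neg h2, Real.sign_of_pos h3,
      Real.sign_of_neg (mul_neg_of_neg_of_pos (mul_neg_of_pos_of_neg h1 h2) h3)]
    have sA := arg_pos_of_im_pos h1
    have sB := Complex.arg_neg_iff.mpr h2
    have sC := arg_pos_of_im_pos h3
    have hk0 : k = 0 := by
      have hb1 : 2 * Real.pi * ((-1 : ℤ) : ℝ) < 2 * Real.pi * (k : ℝ) := by
        rw [← hk]; push_cast; linarith
      have hb2 : 2 * Real.pi * (k : ℝ) < 2 * Real.pi * ((1 : ℤ) : ℝ) := by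
        rw [← hk]; push_cast; linarith
      have l1 : (-1 : ℤ) < k := by
        exact_mod_cast (mul_lt_mul_iff_right₀ (by positivity : (0:ℝ) < 2 * Real.pi)).mp hb1
      have l2 : k < (1 : ℤ) := by
        exact_mod_cast (mul_lt_mul_iff_right₀ (by positivity : (0:ℝ) < 2 * Real.pi)).mp hb2
      omega
    rw [hk0] at hk; push_cast at hk; linarith
  · -- (+,+,-)
    rw [Real.sign_of_pos h1, Real.sign_of_pos h2, Real.sign_of_neg h3,
      Real.sign_of_neg (mul_neg_of_pos_of_neg (mul_pos h1 h2) h3)]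
    have sA := arg_pos_of_im_pos h1
    have sB := arg_pos_of_im_pos h2
    have sC := Complex.arg_neg_iff.mpr h3
    have hk0 : k = 1 := by
      have hb1 : 2 * Real.pi * ((0 : ℤ) : ℝ) < 2 * Real.pi * (k : ℝ) := by
        rw [← hk]; push_cast; linarith
      have hb2 : 2 * Real.pi * (k : ℝ) < 2 * Real.pi * ((2 : ℤ) : ℝ) := by
        rw [← hk]; push_cast; linarith
      have l1 : (0 : ℤ) < k := by
        exact_mod_cast (mul_lt_mul_iff_right₀ (by positivity : (0:ℝ) < 2 * Real.pi)).mp hb1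
      have l2 : k < (2 : ℤ) := by
        exact_mod_cast (mul_lt_mul_iff_right₀ (by positivity : (0:ℝ) < 2 * Real.pi)).mp hb2
      omega
    rw [hk0] at hk; push_cast at hk; linarith
  · -- (+,+,+)
    rw [Real.sign_of_pos h1, Real.sign_of_pos h2, Real.sign_of_pos h3,
      Real.sign_of_pos (mul_pos (mul_pos h1 h2) h3)]
    have sA := arg_pos_of_im_pos h1
    have sB := arg_pos_of_im_pos h2
    have sC := arg_pos_of_im_pos h3
    have hk0 : k = 0 := by
      have hb1 : 2 * Real.pi * ((-1 : ℤ) : ℝ) < 2 * Real.pi * (k : ℝ) := by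
        rw [← hk]; push_cast; linarith
      have hb2 : 2 * Real.pi * (k : ℝ) < 2 * Real.pi * ((1 : ℤ) : ℝ) := by
        rw [← hk]; push_cast; linarith
      have l1 : (-1 : ℤ) < k := by
        exact_mod_cast (mul_lt_mul_iff_right₀ (by positivity : (0:ℝ) < 2 * Real.pi)).mp hb1
      have l2 : k < (1 : ℤ) := by
        exact_mod_cast (mul_lt_mul_iff_right₀ (by positivity : (0:ℝ) < 2 * Real.pi)).mp hb2
      omega
    rw [hk0] at hk; push_cast at hk; linarith

theorem phaseFactor_eq_sign_formula (M N : Matrix.SpecialLinearGroup (Fin 2) ℝ)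
    (hM : M 1 0 ≠ 0) (hN : N 1 0 ≠ 0) (hMN : (M * N) 1 0 ≠ 0)
    (z : ℂ) (hz : 0 < z.im) :
    phaseFactor M N z =
      ((Real.sign (M 1 0) + Real.sign (N 1 0) - Real.sign ((M * N) 1 0)
        - Real.sign (M 1 0 * N 1 0 * (M * N) 1 0)) / 4 : ℝ) := by
  have hzne : z.im ≠ 0 := hz.ne'
  set b := jfac N z with hbdef
  have hbim : b.im = N 1 0 * z.im := jfac_im N z
  have hbimne : b.im ≠ 0 := by rw [hbim]; exact mul_ne_zero hN hzne
  have hbne : b ≠ 0 := fun h => hbimne (by rw [h]; simp)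
  have hwim : (moebiusAct N z).im = z.im / Complex.normSq b := moebius_im N z
  have hnspos : 0 < Complex.normSq b := Complex.normSq_pos.mpr hbne
  have hwpos : 0 < (moebiusAct N z).im := by rw [hwim]; positivity
  set a := jfac M (moebiusAct N z) with hadef
  have haim : a.im = M 1 0 * (moebiusAct N z).im := jfac_im _ _
  have haimne : a.im ≠ 0 := by rw [haim]; exact mul_ne_zero hM hwpos.ne'
  have hane : a ≠ 0 := fun h => haimne (by rw [h]; simp)
  have hcoc : jfac (M * N) z = a * b := jfac_cocycle M N z hbne
  have habim : (a * b).im = (M * N) 1 0 * z.im := by rw [← hcoc]; exact jfac_im _ _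
  have habimne : (a * b).im ≠ 0 := by rw [habim]; exact mul_ne_zero hMN hzne
  have hlog : -(Complex.log (a * b)) + Complex.log a + Complex.log b
      = ((a.arg + b.arg - (a * b).arg : ℝ) : ℂ) * Complex.I := by
    apply Complex.ext
    · simp only [Complex.add_re, Complex.neg_re, Complex.log_re, map_mul, norm_mul,
        Real.log_mul (norm_ne_zero_iff.mpr hane) (norm_ne_zero_iff.mpr hbne),
        Complex.ofReal_sub, Complex.ofReal_add, Complex.mul_re, Complex.I_re, Complex.I_im]
      simp
    · simp [Complex.log_im]
      ring
  have hpi : (2 * (Real.pi : ℂ) * Complex.I) ≠ 0 := by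
    simp [Real.pi_ne_zero, Complex.I_ne_zero]
  have hrw : phaseFactor M N z = ((a.arg + b.arg - (a * b).arg) / (2 * Real.pi) : ℝ) := by
    unfold phaseFactor
    rw [hcoc, ← hadef, ← hbdef, hlog]
    rw [show ((2:ℂ) * Real.pi * Complex.I) = ((2 * Real.pi : ℝ) : ℂ) * Complex.I by
      push_cast; ring]
    rw [mul_div_mul_right _ _ Complex.I_ne_zero, ← Complex.ofReal_div]
  rw [hrw]
  norm_cast
  rw [arg_key a b haimne hbimne habimne]
  have hsA : Real.sign a.im = Real.sign (M 1 0 : ℝ) := by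
    rw [haim, sign_mul_pos' _ _ hwpos]
  have hsB : Real.sign b.im = Real.sign (N 1 0 : ℝ) := by
    rw [hbim, sign_mul_pos' _ _ hz]
  have hsC : Real.sign (a * b).im = Real.sign ((M * N) 1 0 : ℝ) := by
    rw [habim, sign_mul_pos' _ _ hz]
  have hsP : Real.sign (a.im * b.im * (a * b).im)
      = Real.sign ((M 1 0 : ℝ) * N 1 0 * (M * N) 1 0) := by
    have he : a.im * b.im * (a * b).im
        = ((M 1 0 : ℝ) * N 1 0 * (M * N) 1 0) * ((moebiusAct N z).im * z.im * z.im) := by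
      rw [haim, hbim, habim]; ring
    rw [he, sign_mul_pos']
    positivity
  rw [hsA, hsB, hsC, hsP]
  field_simp
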